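/- Let 𝕋 = ℝ/ℤ be the circle group with its usual topology and let ℋ be the family of all subgroups of 𝕋^ℕ (with the product topology) that are weakly controllable in 𝕋^ℕ but not controllable in 𝕋^ℕ. Then ℋ has cardinality 2^𝔠, where 𝔠 is the cardinality of the continuum. -/

import Mathlib

/-- Projection of an element of the direct product `ℕ → M` to the coordinates
in `J`. -/
def proj {M : Type*} (J : Set ℕ) (g : ℕ → M) : J → M :=
  fun j => g j

/-- A subgroup `H` of the direct product `G = M^ℕ` is *controllable* in `G` if
`p_J(H) = p_J(H ∩ ⊕_{n ∈ ℕ} M)` for every finite `J ⊆ ℕ`. -/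
def Controllable {M : Type*} [AddCommGroup M] (H : AddSubgroup (ℕ → M)) : Prop :=
  ∀ J : Set ℕ, J.Finite →
    proj J '' (H : Set (ℕ → M)) =
      proj J '' ((H : Set (ℕ → M)) ∩ {g | {n | g n ≠ 0}.Finite})

/-- A subgroup `H` of the direct product `G = M^ℕ` of a topological abelian
group is *weakly controllable* in `G` if `H ∩ ⊕_{n ∈ ℕ} M` is dense in `H`
(with respect to the Tychonoff product topology). -/
def WeaklyControllable {M : Type*} [AddCommGroup M] [TopologicalSpace M]
    (H : AddSubgroup (ℕ → M)) : Prop :=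
  (H : Set (ℕ → M)) ⊆ closure ((H : Set (ℕ → M)) ∩ {g | {n | g n ≠ 0}.Finite})

noncomputable section Aux

open Cardinal Set

local notation "𝕋" => AddCircle (1 : ℝ)

/-- The canonical projection `ℝ → 𝕋`. -/
def pihom : ℝ →+ 𝕋 := QuotientAddGroup.mk' (AddSubgroup.zmultiples (1 : ℝ))

lemma pihom_surjective : Function.Surjective pihom :=
  QuotientAddGroup.mk'_surjective _

lemma pihom_continuous : Continuous pihom := continuous_quotient_mk'

/-- The subgroup of rational points of the circle. -/
def Qsub : AddSubgroup 𝕋 :=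
  AddSubgroup.map pihom (AddMonoidHom.range ((Rat.castHom ℝ).toAddMonoidHom))

lemma dense_Qsub : Dense (Qsub : Set 𝕋) := by
  have h : DenseRange (fun q : ℚ => pihom (q : ℝ)) :=
    DenseRange.comp (pihom_surjective.denseRange) Rat.denseRange_cast pihom_continuous
  refine h.mono ?_
  rintro x ⟨q, rfl⟩
  exact ⟨(q : ℝ), ⟨q, rfl⟩, rfl⟩

/-- The subgroup of finitely supported rational sequences. -/
def Dsub : AddSubgroup (ℕ → 𝕋) where
  carrier := {g | {n | g n ≠ 0}.Finite ∧ ∀ n, g n ∈ Qsub}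
  zero_mem' := by
    refine ⟨?_, fun n => zero_mem _⟩
    simp
  add_mem' := by
    rintro a b ⟨ha, ha'⟩ ⟨hb, hb'⟩
    refine ⟨(ha.union hb).subset ?_, fun n => add_mem (ha' n) (hb' n)⟩
    intro n hn
    by_contra h
    simp only [mem_union, mem_setOf_eq, not_or, not_not] at h
    exact hn (by simp [Pi.add_apply, h.1, h.2])
  neg_mem' := by
    rintro a ⟨ha, ha'⟩
    refine ⟨ha.subset ?_, fun n => neg_mem (ha' n)⟩
    intro n hn
    simpa using hn

/-- The constant-sequence embedding `𝕋 →+ 𝕋^ℕ`. -/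
def constHom : 𝕋 →+ (ℕ → 𝕋) where
  toFun v := fun _ => v
  map_zero' := rfl
  map_add' _ _ := rfl

lemma single_mem_closure (n : ℕ) (x : 𝕋) :
    Pi.single n x ∈ Dsub.topologicalClosure := by
  have hcont : Continuous (fun y : 𝕋 => Pi.single n y : 𝕋 → (ℕ → 𝕋)) := by
    refine continuous_pi fun m => ?_
    by_cases h : m = n
    · subst h; simpa using continuous_id'
    · simp only [Pi.single_apply, if_neg h]
      exact continuous_const
  have hclosed : IsClosed {y : 𝕋 | Pi.single n y ∈ Dsub.topologicalClosure} :=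
    IsClosed.preimage hcont Dsub.isClosed_topologicalClosure
  have hQ : (Qsub : Set 𝕋) ⊆ {y : 𝕋 | Pi.single n y ∈ Dsub.topologicalClosure} := by
    intro v hv
    refine Dsub.le_topologicalClosure ?_
    refine ⟨(Set.finite_singleton n).subset ?_, fun m => ?_⟩
    · intro m hm
      by_contra h
      simp only [mem_setOf_eq, ne_eq, Pi.single_apply, not_not] at hm
      rw [if_neg (fun hh => h (by simp [hh]))] at hm
      exact hm rfl
    · by_cases h : m = n
      · subst h; simpa using hv
      · simp [Pi.single_apply, h, zero_mem]
  have := dense_Qsub.closure_eq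
  have huniv : closure (Qsub : Set 𝕋) ⊆ {y : 𝕋 | Pi.single n y ∈ Dsub.topologicalClosure} :=
    closure_minimal hQ hclosed
  exact huniv (this ▸ Set.mem_univ x)

lemma dense_Dsub : Dense (Dsub : Set (ℕ → 𝕋)) := by
  intro g
  have hmem : g ∈ Dsub.topologicalClosure := by
    classical
    set s : ℕ → (ℕ → 𝕋) := fun k => ∑ n ∈ Finset.range k, Pi.single n (g n) with hs
    have hsk : ∀ k, s k ∈ Dsub.topologicalClosure := fun k =>
      AddSubgroup.sum_mem _ fun n _ => single_mem_closure n (g n)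
    have htend : Filter.Tendsto s Filter.atTop (nhds g) := by
      rw [tendsto_pi_nhds]
      intro m
      refine Filter.Tendsto.congr' ?_ (tendsto_const_nhds (x := g m))
      filter_upwards [Filter.eventually_ge_atTop (m + 1)] with k hk
      have : s k m = if m ∈ Finset.range k then g m else 0 := by
        simp [hs, Finset.sum_pi_single]
      rw [this, if_pos (Finset.mem_range.2 hk)]
    exact Dsub.isClosed_topologicalClosure.mem_of_tendsto htend
      (Filter.Eventually.of_forall hsk)
  exact hmem


/-- The subgroup of the circle generated by the projections of the reals in `A`. -/
def Wsub (A : Set ℝ) : AddSubgroup 𝕋 := AddSubgroup.map pihom (AddSubgroup.closure A)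

/-- The main family of subgroups. -/
def HH (A : Set ℝ) : AddSubgroup (ℕ → 𝕋) := Dsub ⊔ (Wsub A).map constHom

lemma Dsub_le_HH (A : Set ℝ) : Dsub ≤ HH A := le_sup_left

lemma weaklyControllable_HH (A : Set ℝ) : WeaklyControllable (HH A) := by
  intro g _
  have hsub : (Dsub : Set (ℕ → 𝕋)) ⊆
      (HH A : Set (ℕ → 𝕋)) ∩ {g | {n | g n ≠ 0}.Finite} := by
    intro d hd
    exact ⟨Dsub_le_HH A hd, hd.1⟩
  have : Dense ((HH A : Set (ℕ → 𝕋)) ∩ {g | {n | g n ≠ 0}.Finite}) :=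
    dense_Dsub.mono hsub
  rw [this.closure_eq]
  trivial

/-- A finitely supported element of `HH A` lies in `Dsub`. -/
lemma mem_Dsub_of_finite {A : Set ℝ} {g : ℕ → 𝕋} (hg : g ∈ HH A)
    (hfin : {n | g n ≠ 0}.Finite) : g ∈ Dsub := by
  rcases AddSubgroup.mem_sup.1 hg with ⟨d, hd, c, hc, hdc⟩
  rcases AddSubgroup.mem_map.1 hc with ⟨w, _, rfl⟩
  have hw : w = 0 := by
    by_contra hw
    have hsup : {n : ℕ | (g - d) n ≠ 0} = Set.univ := by
      ext n
      simp only [Set.mem_setOf_eq, Set.mem_univ, iff_true]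
      have : (g - d) n = w := by
        rw [← hdc]; show (d + constHom w - d) n = w; simp [constHom]
      rw [this]; exact hw
    have : {n : ℕ | (g - d) n ≠ 0}.Finite := by
      have := hfin.union hd.1
      refine this.subset ?_
      intro n hn
      by_contra h
      simp only [Set.mem_union, Set.mem_setOf_eq, not_or, not_not] at h
      exact hn (by simp [Pi.sub_apply, h.1, h.2])
    rw [hsup] at this
    exact Set.infinite_univ this
  subst hw
  have : g = d := by rw [← hdc]; funext n; simp [constHom]
  rw [this]; exact hd

lemma const_mem_HH_iff {A : Set ℝ} {v : 𝕋} :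
    constHom v ∈ HH A ↔ v ∈ Wsub A := by
  constructor
  · intro h
    rcases AddSubgroup.mem_sup.1 h with ⟨d, hd, c, hc, hdc⟩
    rcases AddSubgroup.mem_map.1 hc with ⟨w, hw, rfl⟩
    have hv : v = w := by
      by_contra hvw
      have : {n : ℕ | d n ≠ 0} = Set.univ := by
        ext n
        simp only [Set.mem_setOf_eq, Set.mem_univ, iff_true]
        have h1 : d n + w = v := congrFun hdc n
        have : d n = v - w := by rw [← h1]; abel
        rw [this]
        exact sub_ne_zero.2 hvw
      have hfin' := hd.1
      rw [this] at hfin'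
      exact Set.infinite_univ hfin'
    rw [hv]; exact hw
  · intro h
    exact AddSubgroup.mem_sup.2 ⟨0, zero_mem _, constHom v,
      AddSubgroup.mem_map.2 ⟨v, h, rfl⟩, zero_add _⟩


/-- The (finite) set of basis vectors supporting `1` in the `ℚ`-basis of `ℝ`. -/
def Fset : Set ℝ :=
  Subtype.val '' ((((Module.Basis.ofVectorSpace ℚ ℝ).repr 1).support :
    Finset ↥(Module.Basis.ofVectorSpaceIndex ℚ ℝ)) : Set ↥(Module.Basis.ofVectorSpaceIndex ℚ ℝ))

lemma Fset_finite : Fset.Finite :=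
  (((Module.Basis.ofVectorSpace ℚ ℝ).repr 1).support.finite_toSet).image _

lemma one_mem_span_Fset : (1 : ℝ) ∈ Submodule.span ℚ Fset := by
  have h := Module.Basis.mem_span_repr_support (Module.Basis.ofVectorSpace ℚ ℝ) 1
  have himg : ⇑(Module.Basis.ofVectorSpace ℚ ℝ) ''
      ((((Module.Basis.ofVectorSpace ℚ ℝ).repr 1).support :
        Finset ↥(Module.Basis.ofVectorSpaceIndex ℚ ℝ)) : Set ↥(Module.Basis.ofVectorSpaceIndex ℚ ℝ)) = Fset := by
    unfold Fset
    apply Set.image_congr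
    intro j _
    exact Module.Basis.ofVectorSpace_apply_self ℚ ℝ j
  rwa [himg] at h

lemma not_mem_span_main {x : ℝ} (hx : x ∈ Module.Basis.ofVectorSpaceIndex ℚ ℝ) (hxF : x ∉ Fset)
    {A : Set ℝ} (hA : A ⊆ Module.Basis.ofVectorSpaceIndex ℚ ℝ) (hxA : x ∉ A) :
    x ∉ Submodule.span ℚ (A ∪ Fset) := by
  intro hmem
  set b := Module.Basis.ofVectorSpace ℚ ℝ with hb
  set s : Set ↥(Module.Basis.ofVectorSpaceIndex ℚ ℝ) := {j | (j : ℝ) ∈ A ∪ Fset} with hs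
  have himg : A ∪ Fset ⊆ ⇑b '' s := by
    intro y hy
    have hyB : y ∈ Module.Basis.ofVectorSpaceIndex ℚ ℝ := by
      rcases hy with h | h
      · exact hA h
      · rcases h with ⟨j, _, rfl⟩; exact j.2
    exact ⟨⟨y, hyB⟩, hy, Module.Basis.ofVectorSpace_apply_self ℚ ℝ ⟨y, hyB⟩⟩
  have hmem' : x ∈ Submodule.span ℚ (⇑b '' s) :=
    Submodule.span_mono himg hmem
  have hxs : (⟨x, hx⟩ : ↥(Module.Basis.ofVectorSpaceIndex ℚ ℝ)) ∉ s := by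
    intro hmem2
    rcases hmem2 with h | h
    · exact hxA h
    · exact hxF h
  refine b.linearIndependent.notMem_span_image hxs ?_
  rwa [Module.Basis.ofVectorSpace_apply_self]

lemma span_of_mem_Wsub {x : ℝ} {A : Set ℝ} (h : pihom x ∈ Wsub A) :
    x ∈ Submodule.span ℚ (A ∪ Fset) := by
  rcases h with ⟨y, hy, hxy⟩
  have hy' : y ∈ Submodule.span ℚ A := by
    have hle : AddSubgroup.closure A ≤ (Submodule.span ℚ A).toAddSubgroup :=
      (AddSubgroup.closure_le _).2 Submodule.subset_span
    exact hle hy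
  rcases (QuotientAddGroup.mk'_eq_mk' _).1 hxy with ⟨z, hz, hadd⟩
  rcases AddSubgroup.mem_zmultiples_iff.1 hz with ⟨k, hk⟩
  have hz_span : z ∈ Submodule.span ℚ Fset := by
    rw [← hk, ← Int.cast_smul_eq_zsmul ℚ]
    exact Submodule.smul_mem _ _ one_mem_span_Fset
  rw [← hadd]
  exact Submodule.add_mem _
    (Submodule.span_mono Set.subset_union_left hy')
    (Submodule.span_mono Set.subset_union_right hz_span)

lemma span_of_mem_Qsub {x : ℝ} (h : pihom x ∈ Qsub) :
    x ∈ Submodule.span ℚ Fset := by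
  rcases h with ⟨y, ⟨q, rfl⟩, hxy⟩
  have hy' : ((Rat.castHom ℝ).toAddMonoidHom q : ℝ) ∈ Submodule.span ℚ Fset := by
    have : ((Rat.castHom ℝ).toAddMonoidHom q : ℝ) = q • (1 : ℝ) := by
      simp [Rat.smul_def]
    rw [this]
    exact Submodule.smul_mem _ _ one_mem_span_Fset
  rcases (QuotientAddGroup.mk'_eq_mk' _).1 hxy with ⟨z, hz, hadd⟩
  rcases AddSubgroup.mem_zmultiples_iff.1 hz with ⟨k, hk⟩
  have hz_span : z ∈ Submodule.span ℚ Fset := by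
    rw [← hk, ← Int.cast_smul_eq_zsmul ℚ]
    exact Submodule.smul_mem _ _ one_mem_span_Fset
  rw [← hadd]
  exact Submodule.add_mem _ hy' hz_span

lemma not_controllable_HH {A : Set ℝ} {a : ℝ} (ha : a ∈ A)
    (hA : A ⊆ Module.Basis.ofVectorSpaceIndex ℚ ℝ \ Fset) : ¬ Controllable (HH A) := by
  intro hc
  have h0 := hc {0} (Set.finite_singleton 0)
  have hmem : proj {0} (constHom (pihom a)) ∈ proj {0} '' (HH A : Set (ℕ → 𝕋)) :=
    ⟨_, const_mem_HH_iff.2 ⟨a, AddSubgroup.subset_closure ha, rfl⟩, rfl⟩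
  rw [h0] at hmem
  rcases hmem with ⟨g, ⟨hgH, hgfin⟩, hproj⟩
  have hgD : g ∈ Dsub := mem_Dsub_of_finite hgH hgfin
  have h00 : g 0 = pihom a := congrFun hproj ⟨0, rfl⟩
  have hQ : pihom a ∈ Qsub := h00 ▸ hgD.2 0
  have hspan := span_of_mem_Qsub hQ
  refine not_mem_span_main (hA ha).1 (hA ha).2 (Set.empty_subset _)
    (Set.notMem_empty a) ?_
  rwa [Set.empty_union]

lemma HH_subset_of_eq : ∀ {A B : Set ℝ}, A ⊆ Module.Basis.ofVectorSpaceIndex ℚ ℝ \ Fset →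
    B ⊆ Module.Basis.ofVectorSpaceIndex ℚ ℝ \ Fset → HH A = HH B → A ⊆ B := by
  intro A B hA hB h a ha
  have hmem : constHom (pihom a) ∈ HH B := by
    rw [← h]
    exact const_mem_HH_iff.2 ⟨a, AddSubgroup.subset_closure ha, rfl⟩
  have hW : pihom a ∈ Wsub B := const_mem_HH_iff.1 hmem
  have hspan := span_of_mem_Wsub hW
  by_contra haB
  exact not_mem_span_main (hA ha).1 (hA ha).2 (fun y hy => (hB hy).1) haB hspan

lemma HH_injOn {A B : Set ℝ} (hA : A ⊆ Module.Basis.ofVectorSpaceIndex ℚ ℝ \ Fset)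
    (hB : B ⊆ Module.Basis.ofVectorSpaceIndex ℚ ℝ \ Fset) (h : HH A = HH B) : A = B :=
  Set.Subset.antisymm (HH_subset_of_eq hA hB h) (HH_subset_of_eq hB hA h.symm)


lemma mk_diff_countable {s t : Set ℝ} (hs : #↥s = Cardinal.continuum)
    (ht : t.Countable) : #↥(s \ t) = Cardinal.continuum := by
  have h1 : s \ t = s \ (t ∩ s) := by
    ext x; simp only [Set.mem_diff, Set.mem_inter_iff]; tauto
  have h2 := Cardinal.mk_diff_add_mk (Set.inter_subset_right : t ∩ s ⊆ s)
  rw [hs] at h2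
  have hlt : #↥(t ∩ s) < Cardinal.continuum := by
    refine lt_of_le_of_lt ?_ Cardinal.aleph0_lt_continuum
    have h3 : (t ∩ s).Countable := ht.mono Set.inter_subset_left
    have := h3.to_subtype
    exact Cardinal.mk_le_aleph0
  have hle : #↥(s \ (t ∩ s)) ≤ Cardinal.continuum := by
    rw [← h2]; exact self_le_add_right _ _
  have heq : #↥(s \ (t ∩ s)) = Cardinal.continuum := by
    by_contra hne
    have hlt2 : #↥(s \ (t ∩ s)) < Cardinal.continuum := lt_of_le_of_ne hle hne
    have := Cardinal.add_lt_of_lt Cardinal.aleph0_le_continuum hlt2 hlt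
    rw [h2] at this
    exact lt_irrefl _ this
  rw [h1, heq]

end Aux

open Cardinal in
theorem card_weaklyControllable_not_controllable_circle :
    Cardinal.mk {H : AddSubgroup (ℕ → AddCircle (1 : ℝ)) |
        WeaklyControllable H ∧ ¬ Controllable H} =
      2 ^ Cardinal.continuum := by
  classical
  haveI : Fact ((0:ℝ) < 1) := ⟨one_pos⟩
  have hT : #(AddCircle (1:ℝ)) = 𝔠 := by
    rw [Cardinal.mk_congr (AddCircle.equivIco (1:ℝ) 0)]
    exact Cardinal.mk_Ico_real (by norm_num)
  have hPi : #(ℕ → AddCircle (1:ℝ)) = 𝔠 := by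
    rw [← Cardinal.power_def, hT, Cardinal.mk_nat, ← Cardinal.two_power_aleph0,
      ← Cardinal.power_mul, Cardinal.aleph0_mul_aleph0, Cardinal.two_power_aleph0]
  refine le_antisymm ?_ ?_
  · calc #{H : AddSubgroup (ℕ → AddCircle (1 : ℝ)) |
        WeaklyControllable H ∧ ¬ Controllable H}
        ≤ #(AddSubgroup (ℕ → AddCircle (1:ℝ))) := Cardinal.mk_set_le _
      _ ≤ #(Set (ℕ → AddCircle (1:ℝ))) :=
          Cardinal.mk_le_of_injective (SetLike.coe_injective)
      _ = 2 ^ #(ℕ → AddCircle (1:ℝ)) := Cardinal.mk_set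
      _ = 2 ^ 𝔠 := by rw [hPi]
  · -- lower bound
    have hBcard : #↥(Module.Basis.ofVectorSpaceIndex ℚ ℝ) = 𝔠 := by
      rw [(Module.Basis.ofVectorSpace ℚ ℝ).mk_eq_rank'', Real.rank_rat_real]
    have hι : #↥(Module.Basis.ofVectorSpaceIndex ℚ ℝ \ Fset) = 𝔠 :=
      mk_diff_countable hBcard Fset_finite.countable
    have hne : Nonempty ↥(Module.Basis.ofVectorSpaceIndex ℚ ℝ \ Fset) := by
      rw [← Cardinal.mk_ne_zero_iff, hι]
      exact Cardinal.continuum_ne_zero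
    obtain ⟨x₀, hx₀⟩ := hne
    set ι' : Set ℝ := (Module.Basis.ofVectorSpaceIndex ℚ ℝ \ Fset) \ {x₀} with hι'def
    have hι' : #↥ι' = 𝔠 := by
      have : ι' = Module.Basis.ofVectorSpaceIndex ℚ ℝ \ (Fset ∪ {x₀}) := by
        rw [hι'def, Set.diff_diff]
      rw [this]
      exact mk_diff_countable hBcard (Fset_finite.countable.union (Set.countable_singleton _))
    have hsubA : ∀ S : Set ↥ι',
        insert x₀ (Subtype.val '' S) ⊆ Module.Basis.ofVectorSpaceIndex ℚ ℝ \ Fset := by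
      intro S y hy
      rcases hy with rfl | hy
      · exact hx₀
      · rcases hy with ⟨j, _, rfl⟩
        exact j.2.1
    set f : Set ↥ι' → {H : AddSubgroup (ℕ → AddCircle (1 : ℝ)) |
        WeaklyControllable H ∧ ¬ Controllable H} :=
      fun S => ⟨HH (insert x₀ (Subtype.val '' S)),
        weaklyControllable_HH _,
        not_controllable_HH (Set.mem_insert _ _) (hsubA S)⟩ with hf
    have hfinj : Function.Injective f := by
      intro S T hST
      have hHH : HH (insert x₀ (Subtype.val '' S)) = HH (insert x₀ (Subtype.val '' T)) := by
        simpa [hf, Subtype.mk.injEq] using hST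
      have heq : insert x₀ (Subtype.val '' S) = insert x₀ (Subtype.val '' T) :=
        HH_injOn (hsubA S) (hsubA T) hHH
      have hx₀S : x₀ ∉ (Subtype.val '' S) := by
        rintro ⟨j, _, hj⟩
        exact j.2.2 (by rw [hj]; rfl)
      have hx₀T : x₀ ∉ (Subtype.val '' T) := by
        rintro ⟨j, _, hj⟩
        exact j.2.2 (by rw [hj]; rfl)
      have himg : Subtype.val '' S = Subtype.val '' T := by
        have := congrArg (fun s => s \ ({x₀} : Set ℝ)) heq
        simpa [Set.insert_diff_self_of_notMem, hx₀S, hx₀T] using this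
      exact Set.image_injective.2 Subtype.val_injective himg
    have := Cardinal.mk_le_of_injective hfinj
    rwa [Cardinal.mk_set, hι'] at this
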